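/- If T is a ditree and H is any digraph, then γ(T □ H) ≥ γ(T) · γ(H) (every ditree satisfies Vizing's inequality). -/

import Mathlib

open SimpleGraph

variable {V W : Type*}

/-- The closed out-neighborhood of `v` in the digraph with arc relation `A`. -/
def NplusC (A : V → V → Prop) (v : V) : Set V := insert v {u | A v u}

/-- The closed in-neighborhood of `v`. -/
def NminusC (A : V → V → Prop) (v : V) : Set V := insert v {u | A u v}

/-- The open out-neighborhood of `v`. -/
def NplusO (A : V → V → Prop) (v : V) : Set V := {u | A v u}

/-- The open in-neighborhood of `v`. -/
def NminusO (A : V → V → Prop) (v : V) : Set V := {u | A u v}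

/-- `S` is a dominating set: every vertex is in a closed out-neighborhood of a member of `S`. -/
def IsDomSet (A : V → V → Prop) (S : Set V) : Prop := ∀ u, ∃ v ∈ S, u ∈ NplusC A v

/-- The domination number of a digraph. -/
noncomputable def domNum (V : Type*) [Fintype V] (A : V → V → Prop) : ℕ :=
  sInf {n | ∃ S : Set V, IsDomSet A S ∧ S.ncard = n}

/-- `P` is a packing: closed in-neighborhoods of members are pairwise disjoint. -/
def IsPacking (A : V → V → Prop) (P : Set V) : Prop :=
  P.Pairwise fun x y => Disjoint (NminusC A x) (NminusC A y)

/-- The packing number of a digraph. -/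
noncomputable def packNum (V : Type*) [Fintype V] (A : V → V → Prop) : ℕ :=
  sSup {n | ∃ P : Set V, IsPacking A P ∧ P.ncard = n}

/-- `S` is a total dominating set: every vertex has an in-neighbor in `S`. -/
def IsTotalDomSet (A : V → V → Prop) (S : Set V) : Prop := ∀ u, ∃ v ∈ S, A v u

/-- The total domination number of a digraph. -/
noncomputable def totalDomNum (V : Type*) [Fintype V] (A : V → V → Prop) : ℕ :=
  sInf {n | ∃ S : Set V, IsTotalDomSet A S ∧ S.ncard = n}

/-- `P` is an open packing: open in-neighborhoods of members are pairwise disjoint. -/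
def IsOpenPacking (A : V → V → Prop) (P : Set V) : Prop :=
  P.Pairwise fun x y => Disjoint (NminusO A x) (NminusO A y)

/-- The open packing number of a digraph. -/
noncomputable def openPackNum (V : Type*) [Fintype V] (A : V → V → Prop) : ℕ :=
  sSup {n | ∃ P : Set V, IsOpenPacking A P ∧ P.ncard = n}

/-- The underlying (simple) graph of a digraph. -/
def ugr (A : V → V → Prop) : SimpleGraph V := SimpleGraph.fromRel A

/-- A ditree is a digraph whose underlying graph is a tree. -/
def IsDitree (A : V → V → Prop) : Prop := (ugr A).IsTree

/-- Arc relation of the Cartesian product of two digraphs. -/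
def cartArc (A : V → V → Prop) (B : W → W → Prop) : V × W → V × W → Prop :=
  fun p q => (p.1 = q.1 ∧ B p.2 q.2) ∨ (p.2 = q.2 ∧ A p.1 q.1)

/-- Arc relation of the direct product of two digraphs. -/
def dirArc (A : V → V → Prop) (B : W → W → Prop) : V × W → V × W → Prop :=
  fun p q => A p.1 q.1 ∧ B p.2 q.2

/-- The closed in-neighborhood graph of a digraph: distinct vertices are adjacent iff
their closed in-neighborhoods intersect. -/
def Ncg (A : V → V → Prop) : SimpleGraph V :=
  SimpleGraph.fromRel (fun u v => (NminusC A u ∩ NminusC A v).Nonempty)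

/-- The open in-neighborhood graph of a digraph: distinct vertices are adjacent iff
their open in-neighborhoods intersect. -/
def Nog (A : V → V → Prop) : SimpleGraph V :=
  SimpleGraph.fromRel (fun u v => (NminusO A u ∩ NminusO A v).Nonempty)


section TreeLemmas
set_option linter.unusedSectionVars false
variable {V : Type*} [DecidableEq V] {G : SimpleGraph V}

lemma myAdjDistLe (hc : G.Connected) (r x y : V) (h : G.Adj x y) :
    G.dist r y ≤ G.dist r x + 1 := by
  obtain ⟨w, hw⟩ := (hc r x).exists_walk_length_eq_dist
  calc G.dist r y ≤ (w.concat h).length := SimpleGraph.dist_le _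
    _ = G.dist r x + 1 := by rw [SimpleGraph.Walk.length_concat, hw]

lemma myExistsPathDist (hc : G.Connected) (r x : V) :
    ∃ p : G.Walk r x, p.IsPath ∧ p.length = G.dist r x := by
  obtain ⟨w, hw⟩ := (hc r x).exists_walk_length_eq_dist
  refine ⟨w.bypass, SimpleGraph.Walk.bypass_isPath w, le_antisymm ?_ (SimpleGraph.dist_le _)⟩
  exact le_trans (SimpleGraph.Walk.length_bypass_le w) (le_of_eq hw)

lemma myUniqueLowNbr (hT : G.IsTree) (r v x₁ x₂ : V) (h1 : G.Adj x₁ v) (h2 : G.Adj x₂ v)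
    (hd1 : G.dist r x₁ ≤ G.dist r v) (hd2 : G.dist r x₂ ≤ G.dist r v) : x₁ = x₂ := by
  have hc := hT.isConnected
  have key : ∀ x : V, G.Adj x v → G.dist r x ≤ G.dist r v →
      ∃ p : G.Walk r x, p.IsPath ∧ p.length = G.dist r x ∧ v ∉ p.support := by
    intro x hx hdx
    obtain ⟨p, hp, hlen⟩ := myExistsPathDist hc r x
    refine ⟨p, hp, hlen, fun hv => ?_⟩
    have hq : G.dist r v ≤ (p.takeUntil v hv).length := SimpleGraph.dist_le _
    have hspec := p.take_spec hv
    have hlens : (p.takeUntil v hv).length + (p.dropUntil v hv).length = p.length := by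
      rw [← SimpleGraph.Walk.length_append, hspec]
    have hdrop : (p.dropUntil v hv).length = 0 := by omega
    exact hx.ne (SimpleGraph.Walk.eq_of_length_eq_zero hdrop).symm
  obtain ⟨p1, hp1, _, hv1⟩ := key x₁ h1 hd1
  obtain ⟨p2, hp2, _, hv2⟩ := key x₂ h2 hd2
  have hP1 : (SimpleGraph.Walk.cons h1.symm p1.reverse).IsPath := by
    rw [SimpleGraph.Walk.cons_isPath_iff]
    refine ⟨hp1.reverse, ?_⟩
    rw [SimpleGraph.Walk.support_reverse, List.mem_reverse]; exact hv1
  have hP2 : (SimpleGraph.Walk.cons h2.symm p2.reverse).IsPath := by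
    rw [SimpleGraph.Walk.cons_isPath_iff]
    refine ⟨hp2.reverse, ?_⟩
    rw [SimpleGraph.Walk.support_reverse, List.mem_reverse]; exact hv2
  obtain ⟨q, -, huniq⟩ := hT.existsUnique_path v r
  have heq : (SimpleGraph.Walk.cons h1.symm p1.reverse) =
      (SimpleGraph.Walk.cons h2.symm p2.reverse) := by
    rw [huniq _ hP1, huniq _ hP2]
  have hsup := congrArg SimpleGraph.Walk.support heq
  rw [SimpleGraph.Walk.support_cons, SimpleGraph.Walk.support_cons,
    p1.reverse.support_eq_cons, p2.reverse.support_eq_cons] at hsup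
  simp only [List.cons.injEq] at hsup
  exact hsup.2.1

lemma myParent (hc : G.Connected) (r x : V) (hx : 0 < G.dist r x) :
    ∃ p : V, G.Adj p x ∧ G.dist r p + 1 = G.dist r x := by
  obtain ⟨w, hw⟩ := (hc r x).exists_walk_length_eq_dist
  have hwr : w.reverse.length = G.dist r x := by
    rw [SimpleGraph.Walk.length_reverse, hw]
  cases hrev : w.reverse with
  | nil => rw [hrev] at hwr; simp at hwr; simp_all
  | @cons _ p _ ha q =>
    refine ⟨p, ha.symm, ?_⟩
    have hq : G.dist r p ≤ q.length :=
      (SimpleGraph.dist_le q.reverse).trans (le_of_eq (SimpleGraph.Walk.length_reverse q))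
    have hlen : q.length + 1 = G.dist r x := by
      rw [hrev] at hwr; simpa using hwr
    have h2 := myAdjDistLe hc r p x ha.symm
    omega

lemma myAdjDistNe (hT : G.IsTree) (r x y : V) (h : G.Adj x y) :
    G.dist r x ≠ G.dist r y := by
  intro he
  have hc := hT.isConnected
  rcases Nat.eq_zero_or_pos (G.dist r x) with h0 | hpos
  · have hx : r = x := hc.dist_eq_zero_iff.mp h0
    have hy : r = y := hc.dist_eq_zero_iff.mp (he ▸ h0)
    exact h.ne (hx ▸ hy)
  · obtain ⟨p, hpx, hpd⟩ := myParent hc r x hpos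
    have hpy : p = y := myUniqueLowNbr hT r x p y hpx h.symm (by omega) (by omega)
    rw [hpy] at hpd; omega

lemma myAdjDistStep (hT : G.IsTree) (r x y : V) (h : G.Adj x y) :
    G.dist r y = G.dist r x + 1 ∨ G.dist r x = G.dist r y + 1 := by
  have h1 := myAdjDistLe hT.isConnected r x y h
  have h2 := myAdjDistLe hT.isConnected r y x h.symm
  have h3 := myAdjDistNe hT r x y h
  omega

/-- Structural lemma: in a (finite) tree, any nonempty finset `U` contains either a
vertex isolated within `U`, or a vertex `v` all of whose `U`-neighbors except
possibly `w` are pendant within `U` (their only `U`-neighbor being `v`). -/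
lemma myStruct [Fintype V] (hT : G.IsTree) (U : Finset V) (hU : U.Nonempty) :
    (∃ u ∈ U, ∀ x ∈ U, ¬ G.Adj u x) ∨
    (∃ v ∈ U, ∃ w ∈ U, (∃ c ∈ U, G.Adj v c ∧ c ≠ w) ∧
      ∀ x ∈ U, G.Adj v x → x ≠ w → ∀ t ∈ U, G.Adj x t → t = v) := by
  classical
  have hc := hT.isConnected
  obtain ⟨r⟩ : Nonempty V := ⟨hU.choose⟩
  set N : Finset V := U.filter (fun x => ∃ y ∈ U, G.Adj x y) with hN
  rcases N.eq_empty_or_nonempty with hNe | hNne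
  · left
    obtain ⟨u, hu⟩ := hU
    refine ⟨u, hu, fun x hx hadj => ?_⟩
    have : u ∈ N := Finset.mem_filter.mpr ⟨hu, x, hx, hadj⟩
    rw [hNe] at this; exact absurd this (Finset.notMem_empty u)
  · right
    obtain ⟨u, huN, humax⟩ := N.exists_max_image (fun x => G.dist r x) hNne
    obtain ⟨huU, y, hyU, huy⟩ := Finset.mem_filter.mp huN
    -- v := a U-neighbor of u
    set v : V := y with hv
    have hvU : v ∈ U := hyU
    have hadjvu : G.Adj v u := huy.symm
    have hvN : v ∈ N := Finset.mem_filter.mpr ⟨hvU, u, huU, hadjvu⟩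
    have hdvu : G.dist r v < G.dist r u := by
      have hle := humax v hvN
      have hne := myAdjDistNe hT r u v huy
      omega
    have hdu : G.dist r u = G.dist r v + 1 := by
      rcases myAdjDistStep hT r v u hadjvu with h' | h' <;> omega
    -- w := unique U-neighbor of v with smaller depth, else v itself
    by_cases hw : ∃ x ∈ U, G.Adj v x ∧ G.dist r x ≤ G.dist r v
    · obtain ⟨w, hwU, hwadj, hwd⟩ := hw
      refine ⟨v, hvU, w, hwU, ⟨u, huU, hadjvu, fun h' => by subst h'; omega⟩, ?_⟩
      intro x hxU hvx hxw t htU hxt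
      -- x is a child of v : G.dist r x > G.dist r v
      have hdx : G.dist r v < G.dist r x := by
        by_contra hle
        exact hxw (myUniqueLowNbr hT r v x w hvx.symm hwadj.symm (by omega) hwd)
      have hdx' : G.dist r x = G.dist r v + 1 := by
        rcases myAdjDistStep hT r v x hvx with h' | h' <;> omega
      have hxN : x ∈ N := Finset.mem_filter.mpr ⟨hxU, v, hvU, hvx.symm⟩
      have htmax : G.dist r t ≤ G.dist r u := humax t (Finset.mem_filter.mpr ⟨htU, x, hxU, hxt.symm⟩)
      have hdt : G.dist r t = G.dist r x + 1 ∨ G.dist r x = G.dist r t + 1 := myAdjDistStep hT r x t hxt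
      rcases hdt with h' | h'
      · omega
      · exact (myUniqueLowNbr hT r x t v hxt.symm hvx (by omega) (by omega))
    · refine ⟨v, hvU, v, hvU, ⟨u, huU, hadjvu, hadjvu.ne'⟩, ?_⟩
      intro x hxU hvx hxw t htU hxt
      have hdx : G.dist r v < G.dist r x := by
        by_contra hle
        exact hw ⟨x, hxU, hvx, by omega⟩
      have hdx' : G.dist r x = G.dist r v + 1 := by
        rcases myAdjDistStep hT r v x hvx with h' | h' <;> omega
      have htmax : G.dist r t ≤ G.dist r u := humax t (Finset.mem_filter.mpr ⟨htU, x, hxU, hxt.symm⟩)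
      rcases myAdjDistStep hT r x t hxt with h' | h'
      · omega
      · exact (myUniqueLowNbr hT r x t v hxt.symm hvx (by omega) (by omega))

end TreeLemmas

section Digraph

variable {V : Type*} [Fintype V] [DecidableEq V]

/-- Outside vertices have at most one out-neighbor inside `U`. -/
def myQ (A : V → V → Prop) (U : Finset V) : Prop :=
  ∀ z, z ∉ U → ∀ y₁ ∈ U, ∀ y₂ ∈ U, A z y₁ → A z y₂ → y₁ = y₂

/-- The goal of the main induction. -/
def myGoal (A : V → V → Prop) (U M : Finset V) : Prop :=
  ∃ D P : Finset V, D ⊆ U ∧ P ⊆ U ∧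
    (∀ y ∈ U, y ∉ M → ∃ d ∈ D, y ∈ NplusC A d) ∧
    (∀ p ∈ P, p ∉ M) ∧
    ((P : Set V).Pairwise fun x y => Disjoint (NminusC A x) (NminusC A y)) ∧
    D.card ≤ P.card

lemma myStep (A : V → V → Prop) (U M X M' Dn Pn : Finset V)
    (hQ : myQ A U)
    (hXU : X ⊆ U) (hDn : Dn ⊆ X) (hPn : Pn ⊆ X) (hM'U : M' ⊆ U \ X)
    (hdomX : ∀ y ∈ X, y ∉ M → ∃ d ∈ Dn, y ∈ NplusC A d)
    (hdomM' : ∀ y ∈ M', y ∉ M → ∃ d ∈ Dn, y ∈ NplusC A d)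
    (hMM' : ∀ y ∈ M, y ∉ X → y ∈ M')
    (hPnM : ∀ p ∈ Pn, p ∉ M)
    (hcardn : Dn.card ≤ Pn.card)
    (hpairn : ((Pn : Set V)).Pairwise fun x y => Disjoint (NminusC A x) (NminusC A y))
    (hsafe : ∀ q ∈ Pn, ∀ z ∈ NminusC A q, z ∈ U →
        z ∈ X ∧ ∀ y, A z y → y ∈ U → y ∉ X → y ∈ M')
    (hrec : myGoal A (U \ X) M') :
    myGoal A U M := by
  obtain ⟨D', P', hD'U, hP'U, hdom', hP'M', hpair', hcard'⟩ := hrec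
  have hPnP' : Disjoint Pn P' := by
    rw [Finset.disjoint_left]
    intro a haPn haP'
    exact (Finset.mem_sdiff.mp (hP'U haP')).2 (hPn haPn)
  -- cross disjointness
  have hcross : ∀ q ∈ Pn, ∀ p ∈ P', Disjoint (NminusC A q) (NminusC A p) := by
    intro q hq p hp
    rw [Set.disjoint_left]
    intro t htq htp
    have hpUX := Finset.mem_sdiff.mp (hP'U hp)
    by_cases htU : t ∈ U
    · obtain ⟨htX, hout⟩ := hsafe q hq t htq htU
      rcases Set.mem_insert_iff.mp htp with rfl | hA
      · exact hpUX.2 htX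
      · exact hP'M' p hp (hout p hA hpUX.1 hpUX.2)
    · rcases Set.mem_insert_iff.mp htq with rfl | hAq
      · exact htU (hXU (hPn hq))
      · rcases Set.mem_insert_iff.mp htp with rfl | hAp
        · exact htU hpUX.1
        · have : q = p := hQ t htU q (hXU (hPn hq)) p hpUX.1 hAq hAp
          exact hpUX.2 (this ▸ hPn hq)
  refine ⟨Dn ∪ D', Pn ∪ P', ?_, ?_, ?_, ?_, ?_, ?_⟩
  · intro x hx
    rcases Finset.mem_union.mp hx with h | h
    · exact hXU (hDn h)
    · exact (Finset.mem_sdiff.mp (hD'U h)).1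
  · intro x hx
    rcases Finset.mem_union.mp hx with h | h
    · exact hXU (hPn h)
    · exact (Finset.mem_sdiff.mp (hP'U h)).1
  · intro y hyU hyM
    by_cases hyX : y ∈ X
    · obtain ⟨d, hd, hmem⟩ := hdomX y hyX hyM
      exact ⟨d, Finset.mem_union_left _ hd, hmem⟩
    · by_cases hyM' : y ∈ M'
      · obtain ⟨d, hd, hmem⟩ := hdomM' y hyM' hyM
        exact ⟨d, Finset.mem_union_left _ hd, hmem⟩
      · obtain ⟨d, hd, hmem⟩ := hdom' y (Finset.mem_sdiff.mpr ⟨hyU, hyX⟩) hyM'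
        exact ⟨d, Finset.mem_union_right _ hd, hmem⟩
  · intro p hp
    rcases Finset.mem_union.mp hp with h | h
    · exact hPnM p h
    · intro hpM
      have hpUX := Finset.mem_sdiff.mp (hP'U h)
      exact hP'M' p h (hMM' p hpM hpUX.2)
  · intro a ha b hb hab
    simp only [Finset.coe_union, Set.mem_union, Finset.mem_coe] at ha hb
    rcases ha with ha | ha <;> rcases hb with hb | hb
    · exact hpairn ha hb hab
    · exact hcross a ha b hb
    · exact (hcross b hb a ha).symm
    · exact hpair' hb ha (Ne.symm hab) |>.symm
  · calc (Dn ∪ D').card ≤ Dn.card + D'.card := Finset.card_union_le _ _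
      _ ≤ Pn.card + P'.card := Nat.add_le_add hcardn hcard'
      _ = (Pn ∪ P').card := (Finset.card_union_of_disjoint hPnP').symm

end Digraph

section Main

variable {V : Type*} [Fintype V] [DecidableEq V]

lemma myGoal_empty (A : V → V → Prop) (M : Finset V) : myGoal A ∅ M := by
  refine ⟨∅, ∅, le_refl _, le_refl _, by simp, by simp, by simp, le_refl _⟩

lemma myAdjOf {A : V → V → Prop} (hirr : ∀ v, ¬ A v v) {x y : V} (h : A x y) :
    (ugr A).Adj x y := by
  have hne : x ≠ y := fun he => hirr x (by rwa [← he] at h)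
  exact (SimpleGraph.fromRel_adj A x y).mpr ⟨hne, Or.inl h⟩

lemma myAdjElim {A : V → V → Prop} {x y : V} (h : (ugr A).Adj x y) :
    x ≠ y ∧ (A x y ∨ A y x) := (SimpleGraph.fromRel_adj A x y).mp h

lemma myMain (A : V → V → Prop) (hirr : ∀ v, ¬ A v v) (hT : IsDitree A) :
    ∀ n (U M : Finset V), U.card ≤ n → M ⊆ U → myQ A U → myGoal A U M := by
  classical
  intro n
  induction n with
  | zero =>
    intro U M hc _ _
    have hU : U = ∅ := Finset.card_eq_zero.mp (Nat.le_zero.mp hc)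
    subst hU; exact myGoal_empty A M
  | succ n ih =>
    intro U M hc hMU hQ
    rcases U.eq_empty_or_nonempty with rfl | hUne
    · exact myGoal_empty A M
    have hcard_rec : ∀ X : Finset V, X ⊆ U → X.Nonempty → (U \ X).card ≤ n := by
      intro X hXU hXne
      have h1 : (U \ X).card < U.card := Finset.card_lt_card (Finset.sdiff_ssubset hXU hXne)
      omega
    rcases myStruct (G := ugr A) hT U hUne with ⟨u, huU, hiso⟩ |
      ⟨v, hvU, w, hwU, ⟨c₀, hc₀U, hadjc₀, hc₀w⟩, hpend⟩
    · -- isolated vertex case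
      have hnoA : ∀ x ∈ U, ¬ A u x ∧ ¬ A x u := by
        intro x hx
        constructor
        · intro h; exact hiso x hx (myAdjOf hirr h)
        · intro h; exact hiso x hx (myAdjOf hirr h).symm
      have hXU : ({u} : Finset V) ⊆ U := Finset.singleton_subset_iff.mpr huU
      have hQ' : myQ A (U \ {u}) := by
        intro z hz y₁ hy₁ y₂ hy₂ a₁ a₂
        have hy₁U := (Finset.mem_sdiff.mp hy₁).1
        have hy₂U := (Finset.mem_sdiff.mp hy₂).1
        by_cases hzU : z ∈ U
        · have hzu : z = u := by
            by_contra hne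
            exact hz (Finset.mem_sdiff.mpr ⟨hzU, by simpa using hne⟩)
          subst hzu
          exact absurd a₁ (hnoA y₁ hy₁U).1
        · exact hQ z hzU y₁ hy₁U y₂ hy₂U a₁ a₂
      by_cases huM : u ∈ M
      · refine myStep A U M {u} (M.erase u) ∅ ∅ hQ hXU (by simp) (by simp) ?_ ?_ ?_ ?_
          (by simp) (by simp) (by simp) (by simp) ?_
        · intro y hy
          obtain ⟨hne, hyM⟩ := Finset.mem_erase.mp hy
          exact Finset.mem_sdiff.mpr ⟨hMU hyM, by simpa using hne⟩
        · intro y hy hyM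
          exact absurd (Finset.mem_singleton.mp hy ▸ huM) hyM
        · intro y hy hyM; exact absurd (Finset.mem_erase.mp hy).2 hyM
        · intro y hyM hyX
          exact Finset.mem_erase.mpr ⟨by simpa using hyX, hyM⟩
        · exact ih (U \ {u}) (M.erase u) (hcard_rec _ hXU ⟨u, Finset.mem_singleton_self u⟩)
            (by intro y hy
                obtain ⟨hne, hyM⟩ := Finset.mem_erase.mp hy
                exact Finset.mem_sdiff.mpr ⟨hMU hyM, by simpa using hne⟩) hQ'
      · refine myStep A U M {u} M {u} {u} hQ hXU (le_refl _) (le_refl _) ?_ ?_ ?_ ?_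
          ?_ (le_refl _) ?_ ?_ ?_
        · intro y hy
          exact Finset.mem_sdiff.mpr ⟨hMU hy, by
            simp only [Finset.mem_singleton]
            intro he; exact huM (he ▸ hy)⟩
        · intro y hy _
          rw [Finset.mem_singleton.mp hy]
          exact ⟨u, Finset.mem_singleton_self u, Set.mem_insert u _⟩
        · intro y hy hyM; exact absurd hy hyM
        · intro y hyM _; exact hyM
        · intro p hp; rw [Finset.mem_singleton.mp hp]; exact huM
        · simp
        · intro q hq z hz hzU
          rw [Finset.mem_singleton.mp hq] at hz
          have hzu : z = u := by
            rcases Set.mem_insert_iff.mp hz with rfl | hA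
            · rfl
            · exact absurd hA (hnoA z hzU).2
          subst hzu
          exact ⟨Finset.mem_singleton_self z, fun y hAy hyU _ => absurd hAy (hnoA y hyU).1⟩
        · exact ih (U \ {u}) M (hcard_rec _ hXU ⟨u, Finset.mem_singleton_self u⟩)
            (by intro y hy
                exact Finset.mem_sdiff.mpr ⟨hMU hy, by
                  simp only [Finset.mem_singleton]
                  intro he; exact huM (he ▸ hy)⟩) hQ'
    · -- main case: v with pendant children
      set C : Finset V := U.filter (fun x => (ugr A).Adj v x ∧ x ≠ w) with hCdef
      have hCU : C ⊆ U := Finset.filter_subset _ _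
      have hc₀C : c₀ ∈ C := Finset.mem_filter.mpr ⟨hc₀U, hadjc₀, hc₀w⟩
      have hvC : v ∉ C := by
        intro h
        exact ((ugr A).loopless.irrefl v) (Finset.mem_filter.mp h).2.1
      have hwC : w ∉ C := by
        intro h
        exact (Finset.mem_filter.mp h).2.2 rfl
      have hCne_v : ∀ c ∈ C, c ≠ v := fun c hcC => (Finset.mem_filter.mp hcC).2.1.ne'
      have hCor : ∀ c ∈ C, A v c ∨ A c v := by
        intro c hcC
        exact (myAdjElim (Finset.mem_filter.mp hcC).2.1).2
      have hcout : ∀ c ∈ C, ∀ y, A c y → y ∈ U → y = v := by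
        intro c hcC y h hyU
        exact hpend c (hCU hcC) (Finset.mem_filter.mp hcC).2.1
          (Finset.mem_filter.mp hcC).2.2 y hyU (myAdjOf hirr h)
      have hcin : ∀ c ∈ C, ∀ z, A z c → z ∈ U → z = v := by
        intro c hcC z h hzU
        exact hpend c (hCU hcC) (Finset.mem_filter.mp hcC).2.1
          (Finset.mem_filter.mp hcC).2.2 z hzU (myAdjOf hirr h).symm
      have hAvy : ∀ y, A v y → y ∈ U → y = w ∨ y ∈ C := by
        intro y h hyU
        by_cases hyw : y = w
        · exact Or.inl hyw
        · exact Or.inr (Finset.mem_filter.mpr ⟨hyU, myAdjOf hirr h, hyw⟩)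
      have hAyv : ∀ z, A z v → z ∈ U → z = w ∨ z ∈ C := by
        intro z h hzU
        by_cases hzw : z = w
        · exact Or.inl hzw
        · exact Or.inr (Finset.mem_filter.mpr ⟨hzU, (myAdjOf hirr h).symm, hzw⟩)
      -- generic pairwise disjointness for packings inside C with at most one A v-element
      have hpairC : ∀ S : Finset V, S ⊆ C → (∀ x ∈ S, ∀ y ∈ S, A v x → A v y → x = y) →
          ((S : Set V)).Pairwise fun x y => Disjoint (NminusC A x) (NminusC A y) := by
        intro S hSC huniq a ha b hb hab
        rw [Set.disjoint_left]
        intro t hta htb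
        have haC : a ∈ C := hSC ha
        have hbC : b ∈ C := hSC hb
        by_cases htU : t ∈ U
        · have hta' : t = a ∨ (t = v ∧ A v a) := by
            rcases Set.mem_insert_iff.mp hta with rfl | hA
            · exact Or.inl rfl
            · exact Or.inr ⟨hcin a haC t hA htU, (hcin a haC t hA htU) ▸ hA⟩
          have htb' : t = b ∨ (t = v ∧ A v b) := by
            rcases Set.mem_insert_iff.mp htb with rfl | hA
            · exact Or.inl rfl
            · exact Or.inr ⟨hcin b hbC t hA htU, (hcin b hbC t hA htU) ▸ hA⟩
          rcases hta' with rfl | ⟨rfl, hAa⟩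
          · rcases htb' with rfl | ⟨rfl, hAb⟩
            · exact hab rfl
            · exact hvC haC
          · rcases htb' with rfl | ⟨-, hAb⟩
            · exact hvC hbC
            · exact hab (huniq a ha b hb hAa hAb)
        · have hAta : A t a := by
            rcases Set.mem_insert_iff.mp hta with rfl | hA
            · exact absurd (hCU haC) htU
            · exact hA
          have hAtb : A t b := by
            rcases Set.mem_insert_iff.mp htb with rfl | hA
            · exact absurd (hCU hbC) htU
            · exact hA
          exact hab (hQ t htU a (hCU haC) b (hCU hbC) hAta hAtb)
      -- the two forms of X and corresponding Q-preservation
      have hXU1 : insert v C ⊆ U := Finset.insert_subset hvU hCU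
      have hQ'1 : myQ A (U \ insert v C) := by
        intro z hz y₁ hy₁ y₂ hy₂ a₁ a₂
        have hy₁' := Finset.mem_sdiff.mp hy₁
        have hy₂' := Finset.mem_sdiff.mp hy₂
        by_cases hzU : z ∈ U
        · have hzX : z ∈ insert v C := by
            by_contra hne
            exact hz (Finset.mem_sdiff.mpr ⟨hzU, hne⟩)
          rcases Finset.mem_insert.mp hzX with rfl | hzC
          · rcases hAvy y₁ a₁ hy₁'.1 with rfl | hy₁C
            · rcases hAvy y₂ a₂ hy₂'.1 with rfl | hy₂C
              · rfl
              · exact absurd (Finset.mem_insert_of_mem hy₂C) hy₂'.2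
            · exact absurd (Finset.mem_insert_of_mem hy₁C) hy₁'.2
          · exfalso
            have := hcout z hzC y₁ a₁ hy₁'.1
            exact hy₁'.2 (this ▸ Finset.mem_insert_self v C)
        · exact hQ z hzU y₁ hy₁'.1 y₂ hy₂'.1 a₁ a₂
      have hQ'2 : myQ A (U \ C) := by
        intro z hz y₁ hy₁ y₂ hy₂ a₁ a₂
        have hy₁' := Finset.mem_sdiff.mp hy₁
        have hy₂' := Finset.mem_sdiff.mp hy₂
        by_cases hzU : z ∈ U
        · have hzC : z ∈ C := by
            by_contra hne
            exact hz (Finset.mem_sdiff.mpr ⟨hzU, hne⟩)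
          rw [hcout z hzC y₁ a₁ hy₁'.1, hcout z hzC y₂ a₂ hy₂'.1]
        · exact hQ z hzU y₁ hy₁'.1 y₂ hy₂'.1 a₁ a₂
      -- subsets of children
      set Cp : Finset V := C.filter (fun c => A v c ∧ c ∉ M) with hCpdef
      set C0 : Finset V := C.filter (fun c => ¬ A v c ∧ c ∉ M) with hC0def
      have hC0C : C0 ⊆ C := Finset.filter_subset _ _
      have hC0M : ∀ c ∈ C0, c ∉ M := fun c hc => (Finset.mem_filter.mp hc).2.2
      have hC0nAv : ∀ c ∈ C0, ¬ A v c := fun c hc => (Finset.mem_filter.mp hc).2.1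
      have hC0in : ∀ c ∈ C0, ∀ z ∈ NminusC A c, z ∈ U → z = c := by
        intro c hc z hz hzU
        rcases Set.mem_insert_iff.mp hz with rfl | hA
        · rfl
        · exact absurd ((hcin c (hC0C hc) z hA hzU) ▸ hA) (hC0nAv c hc)
      have hvC0 : v ∉ C0 := fun h => hvC (hC0C h)
      -- the M' used when X = insert v C
      set M1 : Finset V := (M \ insert v C) ∪ (if A v w then {w} else ∅) with hM1def
      have hM1U : M1 ⊆ U \ insert v C := by
        intro y hy
        rcases Finset.mem_union.mp hy with h | h
        · have := Finset.mem_sdiff.mp h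
          exact Finset.mem_sdiff.mpr ⟨hMU this.1, this.2⟩
        · by_cases hvw : A v w
          · rw [if_pos hvw] at h
            rw [Finset.mem_singleton.mp h]
            refine Finset.mem_sdiff.mpr ⟨hwU, ?_⟩
            intro hwX
            rcases Finset.mem_insert.mp hwX with rfl | hwC'
            · exact hirr _ hvw
            · exact hwC hwC'
          · rw [if_neg hvw] at h; exact absurd h (Finset.notMem_empty y)
      have hMM1 : ∀ y ∈ M, y ∉ insert v C → y ∈ M1 := by
        intro y hyM hyX
        exact Finset.mem_union_left _ (Finset.mem_sdiff.mpr ⟨hyM, hyX⟩)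
      have hwM1 : A v w → w ∈ M1 := by
        intro hvw
        exact Finset.mem_union_right _ (by rw [if_pos hvw]; exact Finset.mem_singleton_self w)
      have hM1cases : ∀ y ∈ M1, y ∉ M → y = w ∧ A v w := by
        intro y hy hyM
        rcases Finset.mem_union.mp hy with h | h
        · exact absurd (Finset.mem_sdiff.mp h).1 hyM
        · by_cases hvw : A v w
          · rw [if_pos hvw] at h; exact ⟨Finset.mem_singleton.mp h, hvw⟩
          · rw [if_neg hvw] at h; exact absurd h (Finset.notMem_empty y)
      have hrec1 : ∀ M' : Finset V, M' ⊆ U \ insert v C → myGoal A (U \ insert v C) M' :=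
        fun M' hM' => ih _ M' (hcard_rec _ hXU1 ⟨v, Finset.mem_insert_self v C⟩) hM' hQ'1
      have hMsub1 : M \ insert v C ⊆ U \ insert v C :=
        Finset.sdiff_subset_sdiff hMU (Finset.Subset.refl _)
      have hMsub2 : M \ C ⊆ U \ C := Finset.sdiff_subset_sdiff hMU (Finset.Subset.refl _)
      by_cases hCpne : Cp.Nonempty
      · -- Branch A
        obtain ⟨c₁, hc₁⟩ := hCpne
        obtain ⟨hc₁C, hAvc₁, hc₁M⟩ : c₁ ∈ C ∧ A v c₁ ∧ c₁ ∉ M := by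
          have := Finset.mem_filter.mp hc₁; exact ⟨this.1, this.2.1, this.2.2⟩
        have hc₁C0 : c₁ ∉ C0 := fun h => (hC0nAv c₁ h) hAvc₁
        refine myStep A U M (insert v C) M1 (insert v C0) (insert c₁ C0) hQ hXU1
          (Finset.insert_subset_insert _ hC0C)
          (by intro x hx
              rcases Finset.mem_insert.mp hx with rfl | h
              · exact Finset.mem_insert_of_mem hc₁C
              · exact Finset.mem_insert_of_mem (hC0C h))
          hM1U ?_ ?_ hMM1 ?_ ?_ ?_ ?_ (hrec1 M1 hM1U)
        · -- hdomX
          intro y hy hyM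
          rcases Finset.mem_insert.mp hy with rfl | hyC
          · exact ⟨_, Finset.mem_insert_self _ _, Set.mem_insert _ _⟩
          · by_cases hAvy : A v y
            · exact ⟨v, Finset.mem_insert_self _ _, Set.mem_insert_of_mem _ hAvy⟩
            · have : y ∈ C0 := Finset.mem_filter.mpr ⟨hyC, hAvy, hyM⟩
              exact ⟨y, Finset.mem_insert_of_mem this, Set.mem_insert y _⟩
        · -- hdomM'
          intro y hy hyM
          obtain ⟨rfl, hvw⟩ := hM1cases y hy hyM
          exact ⟨v, Finset.mem_insert_self _ _, Set.mem_insert_of_mem _ hvw⟩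
        · -- hPnM
          intro p hp
          rcases Finset.mem_insert.mp hp with rfl | h
          · exact hc₁M
          · exact hC0M p h
        · -- cards
          rw [Finset.card_insert_of_notMem hvC0, Finset.card_insert_of_notMem hc₁C0]
        · -- pairwise
          refine hpairC (insert c₁ C0) ?_ ?_
          · intro x hx
            rcases Finset.mem_insert.mp hx with rfl | h
            · exact hc₁C
            · exact hC0C h
          · intro x hx y hy hAx hAy
            rcases Finset.mem_insert.mp hx with rfl | hx'
            · rcases Finset.mem_insert.mp hy with rfl | hy'
              · rfl
              · exact absurd hAy (hC0nAv y hy')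
            · exact absurd hAx (hC0nAv x hx')
        · -- hsafe
          intro q hq z hz hzU
          rcases Finset.mem_insert.mp hq with rfl | hqC0
          · have hzcases : z = q ∨ z = v := by
              rcases Set.mem_insert_iff.mp hz with rfl | hA
              · exact Or.inl rfl
              · exact Or.inr (hcin q hc₁C z hA hzU)
            constructor
            · rcases hzcases with rfl | rfl
              · exact Finset.mem_insert_of_mem hc₁C
              · exact Finset.mem_insert_self _ _
            · intro y hAy hyU hyX
              rcases hzcases with rfl | rfl
              · exact absurd ((hcout z hc₁C y hAy hyU) ▸ Finset.mem_insert_self v C) hyX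
              · rcases hAvy y hAy hyU with rfl | hyC
                · exact hwM1 hAy
                · exact absurd (Finset.mem_insert_of_mem hyC) hyX
          · have hzq : z = q := hC0in q hqC0 z hz hzU
            subst hzq
            refine ⟨Finset.mem_insert_of_mem (hC0C hqC0), ?_⟩
            intro y hAy hyU hyX
            exact absurd ((hcout z (hC0C hqC0) y hAy hyU) ▸ Finset.mem_insert_self v C) hyX
      · -- branches B : Cp = ∅, i.e. every child with A v · is in M
        have hCpM : ∀ c ∈ C, A v c → c ∈ M := by
          intro c hcC hAvc
          by_contra hcM
          exact hCpne ⟨c, Finset.mem_filter.mpr ⟨hcC, hAvc, hcM⟩⟩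
        by_cases hC0ne : C0.Nonempty
        · -- Branch B1
          obtain ⟨cs, hcs⟩ := hC0ne
          have hAcsv : A cs v := by
            rcases hCor cs (hC0C hcs) with h | h
            · exact absurd h (hC0nAv cs hcs)
            · exact h
          refine myStep A U M (insert v C) (M \ insert v C) C0 C0 hQ hXU1
            (hC0C.trans (Finset.subset_insert _ _)) (hC0C.trans (Finset.subset_insert _ _))
            hMsub1 ?_ ?_ ?_ hC0M (le_refl _) ?_ ?_
            (hrec1 _ hMsub1)
          · -- hdomX
            intro y hy hyM
            rcases Finset.mem_insert.mp hy with rfl | hyC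
            · exact ⟨cs, hcs, Set.mem_insert_of_mem _ hAcsv⟩
            · by_cases hAvy : A v y
              · exact absurd (hCpM y hyC hAvy) hyM
              · exact ⟨y, Finset.mem_filter.mpr ⟨hyC, hAvy, hyM⟩, Set.mem_insert y _⟩
          · intro y hy hyM; exact absurd (Finset.mem_sdiff.mp hy).1 hyM
          · intro y hyM hyX; exact Finset.mem_sdiff.mpr ⟨hyM, hyX⟩
          · exact hpairC C0 hC0C (fun x hx y hy hAx _ => absurd hAx (hC0nAv x hx))
          · -- hsafe
            intro q hq z hz hzU
            have hzq : z = q := hC0in q hq z hz hzU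
            subst hzq
            refine ⟨Finset.mem_insert_of_mem (hC0C hq), ?_⟩
            intro y hAy hyU hyX
            exact absurd ((hcout z (hC0C hq) y hAy hyU) ▸ Finset.mem_insert_self v C) hyX
        · -- C0 empty as well : all children are in M
          have hCM : ∀ c ∈ C, c ∈ M := by
            intro c hcC
            by_cases hAvc : A v c
            · exact hCpM c hcC hAvc
            · by_contra hcM
              exact hC0ne ⟨c, Finset.mem_filter.mpr ⟨hcC, hAvc, hcM⟩⟩
          by_cases hvM : v ∈ M
          · -- Branch B2a
            refine myStep A U M (insert v C) (M \ insert v C) ∅ ∅ hQ hXU1 (by simp) (by simp)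
              hMsub1 ?_ ?_ ?_ (by simp) (by simp)
              (by simp) (by simp)
              (hrec1 _ hMsub1)
            · intro y hy hyM
              rcases Finset.mem_insert.mp hy with rfl | hyC
              · exact absurd hvM hyM
              · exact absurd (hCM y hyC) hyM
            · intro y hy hyM; exact absurd (Finset.mem_sdiff.mp hy).1 hyM
            · intro y hyM hyX; exact Finset.mem_sdiff.mpr ⟨hyM, hyX⟩
          · by_cases hAwv : A w v
            · -- Branch B2c : X = C only
              have hCUX : C ⊆ U := hCU
              refine myStep A U M C (M \ C) ∅ ∅ hQ hCU (by simp) (by simp)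
                hMsub2 ?_ ?_ ?_ (by simp) (by simp)
                (by simp) (by simp)
                (ih _ _ (hcard_rec _ hCU ⟨c₀, hc₀C⟩) hMsub2 hQ'2)
              · intro y hy hyM; exact absurd (hCM y hy) hyM
              · intro y hy hyM; exact absurd (Finset.mem_sdiff.mp hy).1 hyM
              · intro y hyM hyX; exact Finset.mem_sdiff.mpr ⟨hyM, hyX⟩
            · -- Branch B2b : pack v itself
              refine myStep A U M (insert v C) M1 {v} {v} hQ hXU1
                (Finset.singleton_subset_iff.mpr (Finset.mem_insert_self _ _))
                (Finset.singleton_subset_iff.mpr (Finset.mem_insert_self _ _))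
                hM1U ?_ ?_ hMM1 ?_ (le_refl _) ?_ ?_ (hrec1 M1 hM1U)
              · -- hdomX
                intro y hy hyM
                rcases Finset.mem_insert.mp hy with rfl | hyC
                · exact ⟨_, Finset.mem_singleton_self _, Set.mem_insert _ _⟩
                · exact absurd (hCM y hyC) hyM
              · -- hdomM'
                intro y hy hyM
                obtain ⟨rfl, hvw⟩ := hM1cases y hy hyM
                exact ⟨v, Finset.mem_singleton_self v, Set.mem_insert_of_mem _ hvw⟩
              · intro p hp; rw [Finset.mem_singleton.mp hp]; exact hvM
              · simp
              · -- hsafe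
                intro q hq z hz hzU
                rw [Finset.mem_singleton.mp hq] at hz
                have hzcases : z = v ∨ z ∈ C := by
                  rcases Set.mem_insert_iff.mp hz with rfl | hA
                  · exact Or.inl rfl
                  · rcases hAyv z hA hzU with rfl | hzC
                    · exact absurd hA hAwv
                    · exact Or.inr hzC
                constructor
                · rcases hzcases with rfl | hzC
                  · exact Finset.mem_insert_self _ _
                  · exact Finset.mem_insert_of_mem hzC
                · intro y hAy hyU hyX
                  rcases hzcases with rfl | hzC
                  · rcases hAvy y hAy hyU with rfl | hyC
                    · exact hwM1 hAy
                    · exact absurd (Finset.mem_insert_of_mem hyC) hyX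
                  · exact absurd ((hcout z hzC y hAy hyU) ▸ Finset.mem_insert_self v C) hyX

end Main

section Final

theorem stmt6' {V W : Type*} [Fintype V] [Fintype W]
    (A : V → V → Prop) (B : W → W → Prop)
    (hirrA : ∀ v, ¬ A v v) (hirrB : ∀ w, ¬ B w w)
    (hT : IsDitree A) :
    domNum (V × W) (cartArc A B) ≥ domNum V A * domNum W B := by
  classical
  -- a packing of A at least as large as a dominating set of A
  have hQ : myQ A (Finset.univ : Finset V) := fun z hz => absurd (Finset.mem_univ z) hz
  obtain ⟨D, P, -, -, hdom, -, hpair, hDP⟩ :=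
    myMain A hirrA hT (Finset.univ : Finset V).card Finset.univ ∅ le_rfl
      (Finset.empty_subset _) hQ
  have hγA : domNum V A ≤ D.card := by
    apply Nat.sInf_le
    refine ⟨(D : Set V), ?_, Set.ncard_coe_finset D⟩
    intro u
    obtain ⟨d, hd, hmem⟩ := hdom u (Finset.mem_univ u) (Finset.notMem_empty u)
    exact ⟨d, Finset.mem_coe.mpr hd, hmem⟩
  -- a minimum dominating set of the product
  have hne : {n | ∃ S : Set (V × W), IsDomSet (cartArc A B) S ∧ S.ncard = n}.Nonempty :=
    ⟨(Set.univ : Set (V × W)).ncard, Set.univ, fun u => ⟨u, trivial, Set.mem_insert u _⟩, rfl⟩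
  obtain ⟨S, hS, hScard⟩ : ∃ S : Set (V × W), IsDomSet (cartArc A B) S ∧
      S.ncard = domNum (V × W) (cartArc A B) := Nat.sInf_mem hne
  have hSfin : S.Finite := Set.toFinite S
  set Sf : Finset (V × W) := hSfin.toFinset with hSfdef
  have hSfcard : Sf.card = S.ncard := (Set.ncard_eq_toFinset_card S hSfin).symm
  set T : V → Finset (V × W) := fun p => Sf.filter (fun s => s.1 ∈ NminusC A p) with hTdef
  -- each T p projects onto a dominating set of B
  have hTdom : ∀ p ∈ P, domNum W B ≤ (T p).card := by
    intro p hp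
    have himg : IsDomSet B (((T p).image Prod.snd : Finset W) : Set W) := by
      intro y
      obtain ⟨gh, hghS, hmem⟩ := hS (p, y)
      obtain ⟨g, h⟩ := gh
      have hTp : (g, h) ∈ T p ∧ y ∈ NplusC B h := by
        rcases Set.mem_insert_iff.mp hmem with heq | harc
        · injection heq with h1 h2
          subst h1; subst h2
          exact ⟨Finset.mem_filter.mpr ⟨hSfin.mem_toFinset.mpr hghS, Set.mem_insert _ _⟩,
            Set.mem_insert _ _⟩
        · rcases harc with ⟨h1, h2⟩ | ⟨h1, h2⟩
          · simp only at h1 h2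
            subst h1
            exact ⟨Finset.mem_filter.mpr ⟨hSfin.mem_toFinset.mpr hghS, Set.mem_insert _ _⟩,
              Set.mem_insert_of_mem _ h2⟩
          · simp only at h1 h2
            subst h1
            exact ⟨Finset.mem_filter.mpr ⟨hSfin.mem_toFinset.mpr hghS,
              Set.mem_insert_of_mem _ h2⟩, Set.mem_insert _ _⟩
      exact ⟨h, Finset.mem_coe.mpr (Finset.mem_image_of_mem Prod.snd hTp.1), hTp.2⟩
    calc domNum W B ≤ ((T p).image Prod.snd).card :=
          Nat.sInf_le ⟨_, himg, Set.ncard_coe_finset _⟩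
      _ ≤ (T p).card := Finset.card_image_le
  -- the T p are pairwise disjoint
  have hTdisj : ∀ p₁ ∈ P, ∀ p₂ ∈ P, p₁ ≠ p₂ → Disjoint (T p₁) (T p₂) := by
    intro p₁ h₁ p₂ h₂ hne'
    rw [Finset.disjoint_left]
    intro s hs₁ hs₂
    have hd := hpair (Finset.mem_coe.mpr h₁) (Finset.mem_coe.mpr h₂) hne'
    exact (Set.disjoint_left.mp hd) (Finset.mem_filter.mp hs₁).2 (Finset.mem_filter.mp hs₂).2
  have hsum : P.card * domNum W B ≤ Sf.card := by
    calc P.card * domNum W B = ∑ _p ∈ P, domNum W B := by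
          rw [Finset.sum_const, smul_eq_mul]
      _ ≤ ∑ p ∈ P, (T p).card := Finset.sum_le_sum hTdom
      _ = (P.biUnion T).card := (Finset.card_biUnion hTdisj).symm
      _ ≤ Sf.card := Finset.card_le_card (by
            intro s hs
            obtain ⟨p, -, hsT⟩ := Finset.mem_biUnion.mp hs
            exact (Finset.mem_filter.mp hsT).1)
  calc domNum V A * domNum W B ≤ P.card * domNum W B :=
        Nat.mul_le_mul_right _ (hγA.trans hDP)
    _ ≤ Sf.card := hsum
    _ = domNum (V × W) (cartArc A B) := by rw [hSfcard, hScard]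

end Final

theorem stmt6 {V W : Type*} [Fintype V] [Fintype W]
    (A : V → V → Prop) (B : W → W → Prop)
    (hirrA : ∀ v, ¬ A v v) (hirrB : ∀ w, ¬ B w w)
    (hT : IsDitree A) :
    domNum (V × W) (cartArc A B) ≥ domNum V A * domNum W B :=
  stmt6' A B hirrA hirrB hT
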